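/- Let β₀ ∈ (0, π/2], let P ∈ ℝ², and let v₁, v₂ be unit vectors in ℝ² with |⟨v₁, v₂⟩| ≤ cos β₀. Let ℓᵢ = {P + s·vᵢ : s ∈ ℝ} for i = 1, 2 be the two lines through P with directions v₁ and v₂. If Q ∈ ℝ² and δ ≥ 0 satisfy dist(Q, ℓ₁) ≤ δ and dist(Q, ℓ₂) ≤ δ, then ‖Q − P‖ ≤ 2δ / sin β₀. -/

import Mathlib

open scoped RealInnerProductSpace

lemma unit_coords (v : EuclideanSpace ℝ (Fin 2)) (hv : ‖v‖ = 1) :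
    v 0 ^ 2 + v 1 ^ 2 = 1 := by
  have h : ⟪v, v⟫ = ‖v‖ ^ 2 := real_inner_self_eq_norm_sq v
  rw [PiLp.inner_apply, Fin.sum_univ_two, hv] at h
  simpa [RCLike.inner_apply, sq] using h

lemma cross_le (P v Q : EuclideanSpace ℝ (Fin 2)) (hv : ‖v‖ = 1) (δ : ℝ)
    (h : Metric.infDist Q {x | ∃ s : ℝ, x = P + s • v} ≤ δ) :
    |v 0 * (Q - P) 1 - v 1 * (Q - P) 0| ≤ δ := by
  have hvc := unit_coords v hv
  refine le_trans (le_of_not_gt fun hlt => ?_) h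
  have hne : Set.Nonempty {x : EuclideanSpace ℝ (Fin 2) | ∃ s : ℝ, x = P + s • v} :=
    ⟨P, 0, by simp⟩
  obtain ⟨y, ⟨s, rfl⟩, hdy⟩ := (Metric.infDist_lt_iff hne).1 hlt
  rw [dist_eq_norm] at hdy
  have hQ : Q - (P + s • v) = (Q - P) - s • v := by abel
  rw [hQ] at hdy
  set u := (Q - P) - s • v with hu
  have hu0 : u 0 = (Q - P) 0 - s * v 0 := by simp [hu]
  have hu1 : u 1 = (Q - P) 1 - s * v 1 := by simp [hu]
  have hnorm : ‖u‖ = Real.sqrt (u 0 ^ 2 + u 1 ^ 2) := by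
    rw [EuclideanSpace.norm_eq, Fin.sum_univ_two]
    simp [Real.norm_eq_abs, sq_abs]
  have key : (v 0 * (Q - P) 1 - v 1 * (Q - P) 0) ^ 2 ≤ u 0 ^ 2 + u 1 ^ 2 := by
    have e : v 0 * (Q - P) 1 - v 1 * (Q - P) 0 = v 0 * u 1 - v 1 * u 0 := by
      rw [hu0, hu1]; ring
    rw [e]
    nlinarith [sq_nonneg (v 0 * u 0 + v 1 * u 1)]
  have hle : |v 0 * (Q - P) 1 - v 1 * (Q - P) 0| ≤ ‖u‖ := by
    calc |v 0 * (Q - P) 1 - v 1 * (Q - P) 0|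
        = Real.sqrt ((v 0 * (Q - P) 1 - v 1 * (Q - P) 0) ^ 2) := (Real.sqrt_sq_eq_abs _).symm
      _ ≤ Real.sqrt (u 0 ^ 2 + u 1 ^ 2) := Real.sqrt_le_sqrt key
      _ = ‖u‖ := hnorm.symm
  exact absurd hdy (not_lt.2 hle)

set_option maxHeartbeats 1000000 in
lemma alg_bound (p q r t w0 w1 S C δ : ℝ) (h1 : p ^ 2 + q ^ 2 = 1)
    (h2 : r ^ 2 + t ^ 2 = 1) (hA : |p * w1 - q * w0| ≤ δ)
    (hB : |r * w1 - t * w0| ≤ δ) (hc : |p * r + q * t| ≤ C)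
    (hS : 0 < S) (hC : 0 ≤ C) (hsc : S ^ 2 + C ^ 2 = 1) (hδ : 0 ≤ δ) :
    (w0 ^ 2 + w1 ^ 2) * S ^ 2 ≤ 4 * δ ^ 2 := by
  obtain ⟨A, hAdef⟩ : ∃ A, p * w1 - q * w0 = A := ⟨_, rfl⟩
  obtain ⟨B, hBdef⟩ : ∃ B, r * w1 - t * w0 = B := ⟨_, rfl⟩
  obtain ⟨c, hcdef⟩ : ∃ c, p * r + q * t = c := ⟨_, rfl⟩
  rw [hAdef] at hA; rw [hBdef] at hB; rw [hcdef] at hc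
  have hkey : (1 - c ^ 2) * (w0 ^ 2 + w1 ^ 2) = A ^ 2 + B ^ 2 - 2 * A * B * c := by
    rw [← hAdef, ← hBdef, ← hcdef]
    linear_combination ((r * w1 - t * w0) ^ 2 - (r ^ 2 + t ^ 2) * (w0 ^ 2 + w1 ^ 2)) * h1 +
      ((p * w1 - q * w0) ^ 2 - (w0 ^ 2 + w1 ^ 2)) * h2
  have hA2 : A ^ 2 ≤ δ ^ 2 := by nlinarith [abs_nonneg A, sq_abs A]
  have hB2 : B ^ 2 ≤ δ ^ 2 := by nlinarith [abs_nonneg B, sq_abs B]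
  have hAB : -(2 * A * B * c) ≤ 2 * δ ^ 2 * |c| := by
    have h1' : |A| * |B| ≤ δ * δ := mul_le_mul hA hB (abs_nonneg _) hδ
    have h2' : |2 * A * B * c| ≤ 2 * δ ^ 2 * |c| := by
      rw [abs_mul, abs_mul, abs_mul, abs_two]
      nlinarith [abs_nonneg c, abs_nonneg A, abs_nonneg B]
    linarith [neg_abs_le (2 * A * B * c)]
  have hc1 : |c| ≤ 1 := le_trans hc (by nlinarith [sq_nonneg S])
  have step1 : (1 - c ^ 2) * (w0 ^ 2 + w1 ^ 2) ≤ 2 * δ ^ 2 * (1 + |c|) := by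
    rw [hkey]; linarith
  have hpos : (0 : ℝ) < 1 + |c| := by positivity
  have step2 : (1 - |c|) * (w0 ^ 2 + w1 ^ 2) ≤ 2 * δ ^ 2 := by
    have h' : ((1 - |c|) * (w0 ^ 2 + w1 ^ 2)) * (1 + |c|) ≤ (2 * δ ^ 2) * (1 + |c|) := by
      have e : ((1 - |c|) * (w0 ^ 2 + w1 ^ 2)) * (1 + |c|) = (1 - c ^ 2) * (w0 ^ 2 + w1 ^ 2) := by
        rw [← sq_abs c]; ring
      rw [e]
      linarith [step1]
    exact le_of_mul_le_mul_right h' hpos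
  have step3 : S ^ 2 ≤ 2 * (1 - |c|) := by nlinarith [sq_nonneg (1 - C)]
  nlinarith [step2, mul_nonneg (by linarith : (0:ℝ) ≤ 2 * (1 - |c|) - S ^ 2)
    (by positivity : (0:ℝ) ≤ w0 ^ 2 + w1 ^ 2)]

theorem stmt_2 (β₀ : ℝ) (hβ₀ : β₀ ∈ Set.Ioc (0 : ℝ) (Real.pi / 2))
    (P v₁ v₂ Q : EuclideanSpace ℝ (Fin 2))
    (hv₁ : ‖v₁‖ = 1) (hv₂ : ‖v₂‖ = 1)
    (hangle : |⟪v₁, v₂⟫| ≤ Real.cos β₀)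
    (δ : ℝ) (hδ : 0 ≤ δ)
    (h1 : Metric.infDist Q {x | ∃ s : ℝ, x = P + s • v₁} ≤ δ)
    (h2 : Metric.infDist Q {x | ∃ s : ℝ, x = P + s • v₂} ≤ δ) :
    ‖Q - P‖ ≤ 2 * δ / Real.sin β₀ := by
  obtain ⟨hβ0, hβpi⟩ := hβ₀
  have hs : 0 < Real.sin β₀ :=
    Real.sin_pos_of_pos_of_lt_pi hβ0 (lt_of_le_of_lt hβpi (by linarith [Real.pi_pos]))
  have hC : 0 ≤ Real.cos β₀ := Real.cos_nonneg_of_mem_Icc ⟨by linarith [Real.pi_pos], hβpi⟩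
  have hsc : Real.sin β₀ ^ 2 + Real.cos β₀ ^ 2 = 1 := Real.sin_sq_add_cos_sq β₀
  have hA := cross_le P v₁ Q hv₁ δ h1
  have hB := cross_le P v₂ Q hv₂ δ h2
  have hc : ⟪v₁, v₂⟫ = v₁ 0 * v₂ 0 + v₁ 1 * v₂ 1 := by
    rw [PiLp.inner_apply, Fin.sum_univ_two]; simp [RCLike.inner_apply]; ring
  rw [hc] at hangle
  have h1c := unit_coords v₁ hv₁
  have h2c := unit_coords v₂ hv₂
  have main := alg_bound (v₁ 0) (v₁ 1) (v₂ 0) (v₂ 1) ((Q - P) 0) ((Q - P) 1)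
    (Real.sin β₀) (Real.cos β₀) δ h1c h2c hA hB hangle hs hC hsc hδ
  have hnorm : ‖Q - P‖ = Real.sqrt ((Q - P) 0 ^ 2 + (Q - P) 1 ^ 2) := by
    rw [EuclideanSpace.norm_eq, Fin.sum_univ_two]
    simp [Real.norm_eq_abs, sq_abs]
  rw [le_div_iff₀ hs]
  have hwnn : 0 ≤ ‖Q - P‖ := norm_nonneg _
  have hn2 : ‖Q - P‖ ^ 2 = (Q - P) 0 ^ 2 + (Q - P) 1 ^ 2 := by
    rw [hnorm, Real.sq_sqrt (by positivity)]
  nlinarith [mul_nonneg hwnn hs.le, sq_nonneg (‖Q - P‖ * Real.sin β₀ - 2 * δ),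
    sq_nonneg (‖Q - P‖ * Real.sin β₀ + 2 * δ)]
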